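/- Quotient network observer correctness: with N and N^min as above (N^min a set of bisimulation-class representatives of N), a deterministic FSM Obs is a critical observer for the composed quotient machine M(N^min) if and only if it is a critical observer for the full composed machine M(N). -/

import Mathlib

open Classical

/-- A finite state machine with an alphabet, initial states, nondeterministic
transition map and a set of critical states. -/
structure FSM (S A : Type) where
  alph : Set A
  init : Set S
  tr : S → A → Set S
  crit : Set S

namespace FSM

variable {S S1 S2 S3 S4 A T : Type}

/-- Extended transition map on words. -/
def ehat (M : FSM S A) : S → List A → Set S
  | x, [] => {x}
  | x, σ :: w => ⋃ y ∈ M.tr x σ, M.ehat y w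

/-- Set of states reachable from the initial states by reading `w`. -/
def reach (M : FSM S A) (w : List A) : Set S := ⋃ x0 ∈ M.init, M.ehat x0 w

/-- Critical observability: after any trace, the reachable set is uniformly
critical or uniformly non-critical. -/
def CritObs (M : FSM S A) : Prop :=
  ∀ w : List A, M.reach w ⊆ M.crit ∨ M.reach w ⊆ M.critᶜ

/-- Parallel composition of two FSMs: synchronization on shared labels,
interleaving on private labels; a composite state is critical iff some
component is critical. -/
def par (M1 : FSM S1 A) (M2 : FSM S2 A) : FSM (S1 × S2) A where
  alph := M1.alph ∪ M2.alph
  init := M1.init ×ˢ M2.init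
  tr := fun p σ =>
    {q | (σ ∈ M1.alph ∧ σ ∈ M2.alph ∧ q.1 ∈ M1.tr p.1 σ ∧ q.2 ∈ M2.tr p.2 σ) ∨
         (σ ∈ M1.alph ∧ σ ∉ M2.alph ∧ q.1 ∈ M1.tr p.1 σ ∧ q.2 = p.2) ∨
         (σ ∉ M1.alph ∧ σ ∈ M2.alph ∧ q.1 = p.1 ∧ q.2 ∈ M2.tr p.2 σ)}
  crit := {p | p.1 ∈ M1.crit ∨ p.2 ∈ M2.crit}

/-- Accessible states. -/
def Acc (M : FSM S A) (x : S) : Prop := ∃ x0 ∈ M.init, ∃ w : List A, x ∈ M.ehat x0 w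

/-- Projection of a word onto a sub-alphabet. -/
noncomputable def proj (E : Set A) : List A → List A
  | [] => []
  | σ :: w => if σ ∈ E then σ :: proj E w else proj E w

/-- One step of the powerset observer. -/
def obsStep (M : FSM S A) (z : Set S) (σ : A) : Set S := ⋃ x ∈ z, M.tr x σ

/-- Run of the (deterministic) powerset observer on a word. -/
def obsRun (M : FSM S A) : Set S → List A → Set S
  | z, [] => z
  | z, σ :: w => M.obsRun (M.obsStep z σ) w

/-- The powerset observer of `M`, viewed as an FSM; its critical states encode
output `H(z) = 1`, i.e. `z ∩ C ≠ ∅`. -/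
def obsFSM (M : FSM S A) : FSM (Set S) A where
  alph := M.alph
  init := {M.init}
  tr := fun z σ => {M.obsStep z σ}
  crit := {z | (z ∩ M.crit).Nonempty}

/-- Isomorphism of FSMs via a given bijection. -/
def IsoVia (M1 : FSM S1 A) (M2 : FSM S2 A) (φ : S1 → S2) : Prop :=
  Function.Bijective φ ∧ φ '' M1.init = M2.init ∧
  (∀ x, M1.Acc x → ∀ σ, φ '' M1.tr x σ = M2.tr (φ x) σ) ∧
  (∀ x, x ∈ M1.crit ↔ φ x ∈ M2.crit)

/-- Isomorphism of FSMs. -/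
def Iso (M1 : FSM S1 A) (M2 : FSM S2 A) : Prop :=
  M1.alph = M2.alph ∧ ∃ φ : S1 → S2, IsoVia M1 M2 φ

/-- `R` is a (critical-state-preserving) bisimulation between `M1` and `M2`. -/
def IsBisim (M1 : FSM S1 A) (M2 : FSM S2 A) (R : Set (S1 × S2)) : Prop :=
  (∀ p ∈ R, (p.1 ∈ M1.init ↔ p.2 ∈ M2.init)) ∧
  (∀ p ∈ R, ∀ σ : A, ∀ x1' ∈ M1.tr p.1 σ, ∃ x2' ∈ M2.tr p.2 σ, (x1', x2') ∈ R) ∧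
  (∀ p ∈ R, ∀ σ : A, ∀ x2' ∈ M2.tr p.2 σ, ∃ x1' ∈ M1.tr p.1 σ, (x1', x2') ∈ R) ∧
  (∀ p ∈ R, (p.1 ∈ M1.crit ↔ p.2 ∈ M2.crit))

/-- Bisimilarity: a bisimulation exists, alphabets coincide, and initial states
are totally matched. -/
def Bisimilar (M1 : FSM S1 A) (M2 : FSM S2 A) : Prop :=
  M1.alph = M2.alph ∧
  ∃ R : Set (S1 × S2), IsBisim M1 M2 R ∧
    (∀ x1 ∈ M1.init, ∃ x2 ∈ M2.init, (x1, x2) ∈ R) ∧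
    (∀ x2 ∈ M2.init, ∃ x1 ∈ M1.init, (x1, x2) ∈ R)

/-- Parallel composition of an arbitrary family of FSMs. -/
def parN {ι : Type} {S : ι → Type} (M : ∀ i, FSM (S i) A) : FSM (∀ i, S i) A where
  alph := ⋃ i, (M i).alph
  init := {p | ∀ i, p i ∈ (M i).init}
  tr := fun p σ =>
    {q | σ ∈ ⋃ i, (M i).alph ∧
      ∀ i, (σ ∈ (M i).alph → q i ∈ (M i).tr (p i) σ) ∧ (σ ∉ (M i).alph → q i = p i)}
  crit := {p | ∃ i, p i ∈ (M i).crit}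

end FSM

/-- A deterministic FSM with boolean outputs (an abstract observer). -/
structure DObs (T A : Type) where
  init : T
  tr : T → A → T
  out : T → Bool

/-- Run of a deterministic observer on a word. -/
def DObs.run {T A : Type} (O : DObs T A) : T → List A → T
  | z, [] => z
  | z, σ :: w => O.run (O.tr z σ) w

/-- `O` is a critical observer for `M`: along every run of `M`, the output of
the corresponding observer run is 1 exactly at critical states. -/
def DObs.IsCritObserver {T S A : Type} (O : DObs T A) (M : FSM S A) : Prop :=
  ∀ x0 ∈ M.init, ∀ w : List A, ∀ x ∈ M.ehat x0 w,
    (O.out (O.run O.init w) = true ↔ x ∈ M.crit)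

namespace FSM

variable {S1 S2 A : Type}

/-- One-step transition allowing idling on letters outside the alphabet. -/
def trIdle (M : FSM S1 A) (x : S1) (σ : A) : Set S1 :=
  if σ ∈ M.alph then M.tr x σ else {x}

/-- Extended transition with idling. -/
def ehatIdle (M : FSM S1 A) : S1 → List A → Set S1
  | x, [] => {x}
  | x, σ :: w => ⋃ y ∈ M.trIdle x σ, M.ehatIdle y w

lemma mem_trIdle {M : FSM S1 A} {x y : S1} {σ : A} :
    y ∈ M.trIdle x σ ↔ ((σ ∈ M.alph → y ∈ M.tr x σ) ∧ (σ ∉ M.alph → y = x)) := by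
  by_cases h : σ ∈ M.alph <;> simp [trIdle, h]

/-- Coordinatewise decomposition of runs of a parallel composition. -/
lemma mem_parN_ehat {ι : Type} {S : ι → Type} (M : ∀ i, FSM (S i) A)
    (q0 q : ∀ i, S i) (w : List A) :
    q ∈ (parN M).ehat q0 w ↔
      ((∀ σ ∈ w, σ ∈ ⋃ i, (M i).alph) ∧ ∀ j, q j ∈ (M j).ehatIdle (q0 j) w) := by
  induction w generalizing q0 with
  | nil =>
    simp [ehat, ehatIdle, funext_iff, Set.mem_singleton_iff]
  | cons σ w ih =>
    constructor
    · rintro h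
      simp only [ehat, Set.mem_iUnion, exists_prop] at h
      obtain ⟨y, hy, hrest⟩ := h
      obtain ⟨hσ, htr⟩ : σ ∈ (⋃ i, (M i).alph) ∧ ∀ j,
          (σ ∈ (M j).alph → y j ∈ (M j).tr (q0 j) σ) ∧ (σ ∉ (M j).alph → y j = q0 j) := hy
      obtain ⟨hw, hcoord⟩ := (ih y).1 hrest
      refine ⟨?_, fun j => ?_⟩
      · intro τ hτ
        rcases List.mem_cons.1 hτ with h | h
        · exact h ▸ hσ
        · exact hw τ h
      · simp only [ehatIdle, Set.mem_iUnion, exists_prop]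
        exact ⟨y j, mem_trIdle.2 (htr j), hcoord j⟩
    · rintro ⟨hw, hcoord⟩
      have hc : ∀ j, ∃ y, y ∈ (M j).trIdle (q0 j) σ ∧ q j ∈ (M j).ehatIdle y w := by
        intro j
        have := hcoord j
        simpa only [ehatIdle, Set.mem_iUnion, exists_prop] using this
      choose y hy1 hy2 using hc
      simp only [ehat, Set.mem_iUnion, exists_prop]
      refine ⟨y, ⟨hw σ (List.mem_cons_self), fun j => mem_trIdle.1 (hy1 j)⟩, ?_⟩
      exact (ih y).2 ⟨fun τ hτ => hw τ (List.mem_cons_of_mem σ hτ), hy2⟩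

/-- Forward simulation of idle-extended runs along a bisimulation. -/
lemma sim_fwd {M1 : FSM S1 A} {M2 : FSM S2 A} {R : Set (S1 × S2)}
    (h : IsBisim M1 M2 R) (halph : M1.alph = M2.alph) :
    ∀ w : List A, ∀ x1 x2, (x1, x2) ∈ R →
      ∀ x1' ∈ M1.ehatIdle x1 w, ∃ x2' ∈ M2.ehatIdle x2 w, (x1', x2') ∈ R := by
  intro w
  induction w with
  | nil =>
    intro x1 x2 hR x1' hx1'
    simp only [ehatIdle, Set.mem_singleton_iff] at hx1'
    exact ⟨x2, by simp [ehatIdle], hx1' ▸ hR⟩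
  | cons σ w ih =>
    intro x1 x2 hR x1' hx1'
    simp only [ehatIdle, Set.mem_iUnion, exists_prop] at hx1'
    obtain ⟨y1, hy1, hrest⟩ := hx1'
    by_cases hσ : σ ∈ M1.alph
    · have hy1' : y1 ∈ M1.tr x1 σ := by simpa [trIdle, hσ] using hy1
      obtain ⟨y2, hy2, hR'⟩ := h.2.1 (x1, x2) hR σ y1 hy1'
      obtain ⟨x2', hx2', hRfin⟩ := ih y1 y2 hR' x1' hrest
      refine ⟨x2', ?_, hRfin⟩
      simp only [ehatIdle, Set.mem_iUnion, exists_prop]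
      exact ⟨y2, by simp [trIdle, halph ▸ hσ, hy2], hx2'⟩
    · have hy1' : y1 = x1 := by simpa [trIdle, hσ] using hy1
      obtain ⟨x2', hx2', hRfin⟩ := ih x1 x2 hR x1' (hy1' ▸ hrest)
      refine ⟨x2', ?_, hRfin⟩
      simp only [ehatIdle, Set.mem_iUnion, exists_prop]
      exact ⟨x2, by simp [trIdle, halph ▸ hσ], hx2'⟩

/-- Backward simulation of idle-extended runs along a bisimulation. -/
lemma sim_bwd {M1 : FSM S1 A} {M2 : FSM S2 A} {R : Set (S1 × S2)}
    (h : IsBisim M1 M2 R) (halph : M1.alph = M2.alph) :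
    ∀ w : List A, ∀ x1 x2, (x1, x2) ∈ R →
      ∀ x2' ∈ M2.ehatIdle x2 w, ∃ x1' ∈ M1.ehatIdle x1 w, (x1', x2') ∈ R := by
  intro w
  induction w with
  | nil =>
    intro x1 x2 hR x2' hx2'
    simp only [ehatIdle, Set.mem_singleton_iff] at hx2'
    exact ⟨x1, by simp [ehatIdle], hx2' ▸ hR⟩
  | cons σ w ih =>
    intro x1 x2 hR x2' hx2'
    simp only [ehatIdle, Set.mem_iUnion, exists_prop] at hx2'
    obtain ⟨y2, hy2, hrest⟩ := hx2'
    by_cases hσ : σ ∈ M1.alph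
    · have hy2' : y2 ∈ M2.tr x2 σ := by simpa [trIdle, halph ▸ hσ] using hy2
      obtain ⟨y1, hy1, hR'⟩ := h.2.2.1 (x1, x2) hR σ y2 hy2'
      obtain ⟨x1', hx1', hRfin⟩ := ih y1 y2 hR' x2' hrest
      refine ⟨x1', ?_, hRfin⟩
      simp only [ehatIdle, Set.mem_iUnion, exists_prop]
      exact ⟨y1, by simp [trIdle, hσ, hy1], hx1'⟩
    · have hy2' : y2 = x2 := by simpa [trIdle, halph ▸ hσ] using hy2
      obtain ⟨x1', hx1', hRfin⟩ := ih x1 x2 hR x2' (hy2' ▸ hrest)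
      refine ⟨x1', ?_, hRfin⟩
      simp only [ehatIdle, Set.mem_iUnion, exists_prop]
      exact ⟨x1, by simp [trIdle, hσ], hx1'⟩

end FSM

/-- Quotient network observer correctness: with `rep` selecting
one representative per bisimulation class, a deterministic FSM `Obs` is a
critical observer for the quotient composition iff it is one for the full
composition. -/
theorem stmt_17 {A T : Type} {N : ℕ} {S : Fin N → Type}
    (M : ∀ i, FSM (S i) A) (rep : Fin N → Fin N)
    (hidem : ∀ j, rep (rep j) = rep j)
    (hbis : ∀ j, (M j).Bisimilar (M (rep j)))
    (hdistinct : ∀ i j, rep i = i → rep j = j → i ≠ j → ¬ (M i).Bisimilar (M j))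
    (O : DObs T A) :
    O.IsCritObserver (FSM.parN (fun i : {i : Fin N // rep i = i} => M i.1)) ↔
      O.IsCritObserver (FSM.parN M) := by
  classical
  have halph : ∀ j, (M j).alph = (M (rep j)).alph := fun j => (hbis j).1
  have h2 := fun j => (hbis j).2
  choose R hR hinit12 hinit21 using h2
  set ι := {i : Fin N // rep i = i} with hι
  have hUnion : (⋃ i : ι, (M i.1).alph) = ⋃ j, (M j).alph := by
    ext σ
    simp only [Set.mem_iUnion]
    constructor
    · rintro ⟨i, hi⟩; exact ⟨i.1, hi⟩
    · rintro ⟨j, hj⟩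
      exact ⟨⟨rep j, hidem j⟩, halph j ▸ hj⟩
  constructor
  · -- quotient observer ⇒ full observer
    intro hq x0 hx0 w x hx
    obtain ⟨hw, hcoord⟩ := (FSM.mem_parN_ehat M x0 x w).1 hx
    have hx0' : ∀ j, x0 j ∈ (M j).init := hx0
    constructor
    · intro hout
      -- use the representative coordinates of the full run as a quotient run
      have hp : (fun i : ι => x i.1) ∈
          (FSM.parN (fun i : ι => M i.1)).ehat (fun i : ι => x0 i.1) w := by
        refine (FSM.mem_parN_ehat _ _ _ w).2 ⟨?_, fun i => hcoord i.1⟩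
        intro σ hσ; exact hUnion ▸ hw σ hσ
      have := (hq (fun i : ι => x0 i.1) (fun i => hx0' i.1) w _ hp).1 hout
      obtain ⟨i, hi⟩ := this
      exact ⟨i.1, hi⟩
    · rintro ⟨j, hj⟩
      -- simulate coordinate j inside its representative
      obtain ⟨y0, hy0, hRy0⟩ := hinit12 j (x0 j) (hx0' j)
      obtain ⟨y, hy, hRy⟩ := FSM.sim_fwd (hR j) (halph j) w (x0 j) y0 hRy0 (x j) (hcoord j)
      set i0 : ι := ⟨rep j, hidem j⟩ with hi0
      set p0 : ∀ i : ι, S i.1 := Function.update (fun i : ι => x0 i.1) i0 y0 with hp0def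
      set p : ∀ i : ι, S i.1 := Function.update (fun i : ι => x i.1) i0 y with hpdef
      have hp0 : ∀ i : ι, p0 i ∈ (M i.1).init := by
        intro i
        by_cases h : i = i0
        · subst h; simpa [hp0def] using hy0
        · simp [hp0def, Function.update_of_ne h]; exact hx0' i.1
      have hp : p ∈ (FSM.parN (fun i : ι => M i.1)).ehat p0 w := by
        refine (FSM.mem_parN_ehat _ _ _ w).2 ⟨?_, ?_⟩
        · intro σ hσ; exact hUnion ▸ hw σ hσ
        · intro i
          by_cases h : i = i0
          · subst h; simpa [hpdef, hp0def] using hy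
          · simp only [hpdef, hp0def, Function.update_of_ne h]
            exact hcoord i.1
      refine (hq p0 hp0 w p hp).2 ?_
      refine ⟨i0, ?_⟩
      have hyc : y ∈ (M (rep j)).crit := ((hR j).2.2.2 (x j, y) hRy).1 hj
      simpa [hpdef] using hyc
  · -- full observer ⇒ quotient observer
    intro hf p0 hp0 w p hp
    obtain ⟨hw, hcoord⟩ := (FSM.mem_parN_ehat _ p0 p w).1 hp
    have hp0' : ∀ i : ι, p0 i ∈ (M i.1).init := hp0
    -- build a full run simulating, in each coordinate j, the representative coordinate
    have Hq : ∀ j, ∃ y0 ∈ (M j).init, ∃ y ∈ (M j).ehatIdle y0 w,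
        (y, p ⟨rep j, hidem j⟩) ∈ R j := by
      intro j
      obtain ⟨y0, hy0, hRy0⟩ := hinit21 j (p0 ⟨rep j, hidem j⟩) (hp0' ⟨rep j, hidem j⟩)
      obtain ⟨y, hy, hRy⟩ := FSM.sim_bwd (hR j) (halph j) w y0 (p0 ⟨rep j, hidem j⟩)
        hRy0 (p ⟨rep j, hidem j⟩) (hcoord ⟨rep j, hidem j⟩)
      exact ⟨y0, hy0, y, hy, hRy⟩
    choose q0 hq0 q hq hRq using Hq
    have hqrun : q ∈ (FSM.parN M).ehat q0 w := by
      refine (FSM.mem_parN_ehat M q0 q w).2 ⟨?_, hq⟩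
      intro σ hσ; exact hUnion ▸ hw σ hσ
    have hmain := hf q0 hq0 w q hqrun
    constructor
    · intro hout
      obtain ⟨j, hj⟩ := hmain.1 hout
      exact ⟨⟨rep j, hidem j⟩, ((hR j).2.2.2 _ (hRq j)).1 hj⟩
    · rintro ⟨i, hi⟩
      refine hmain.2 ⟨i.1, ?_⟩
      have hieq : (⟨rep i.1, hidem i.1⟩ : ι) = i := Subtype.ext i.2
      have hi' : p ⟨rep i.1, hidem i.1⟩ ∈ (M (rep i.1)).crit := by
        have : ∀ j : ι, j = i → p j ∈ (M j.1).crit := by rintro j rfl; exact hi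
        exact this _ hieq
      exact ((hR i.1).2.2.2 _ (hRq i.1)).2 hi'
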